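/- If α and β are local difference operators (finite sums of nonnegative powers of Δ), then res(Δ⁻¹ α β Δ⁻¹) = res(Δ⁻¹ P_0(α*) β Δ⁻¹) + res(Δ⁻¹ α P_0(β) Δ⁻¹), where P_0 extracts zero-order parts and α* is the formal adjoint of α. -/

import Mathlib

namespace DiscreteKP

/-- The space `F` of functions on the lattice `ℤ`. -/
abbrev F := ℤ → ℝ

/-- A formal pseudo-difference operator, represented by its coefficients in the
shift basis: `a k n` is the coefficient of `Λ^k` at the site `n`
(so `a` represents `Σ_k a_k(n) Λ^k`, with `Δ = Λ - 1`). -/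
abbrev PDO := ℤ → ℤ → ℝ

/-- Composition in the ring of formal pseudo-difference operators. -/
noncomputable def pmul (a b : PDO) : PDO := fun m n => ∑' j : ℤ, a j n * b (m - j) (n + j)

/-- A function viewed as a (multiplication) operator. -/
def ofFun (f : F) : PDO := fun k n => if k = 0 then f n else 0

/-- The difference operator `Δ = Λ - 1` as a pseudo-difference operator. -/
def pdelta : PDO := fun m _ => if m = 1 then 1 else if m = 0 then -1 else 0

/-- The formal inverse `Δ⁻¹ = Σ_{k<0} Λ^k`. -/
def pdeltaInv : PDO := fun m _ => if m < 0 then 1 else 0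

/-- The formal adjoint: `(f Λ^k)* = Λ^{-k} ∘ f`. -/
def adj (a : PDO) : PDO := fun m n => a (-m) (n + m)

/-- The action of a pseudo-difference operator on a function (when defined). -/
noncomputable def applyOp (a : PDO) (f : F) : F := fun n => ∑' m : ℤ, a m n * f (n + m)

/-- Projection `P_{<0}` onto the part of strictly negative order in `Δ`
(in the shift basis this is the part with strictly negative powers of `Λ`). -/
def Pneg (a : PDO) : PDO := fun m n => if m < 0 then a m n else 0

/-- Projection `R_+` onto the nonnegative (local difference operator) part. -/
def Ppos (a : PDO) : PDO := fun m n => if 0 ≤ m then a m n else 0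

/-- `P_0`: the zero-order coefficient (in `Δ`) of an operator of `F(Δ)`,
namely `Σ_{k ≥ 0} a_k` in the shift basis. -/
noncomputable def P0 (a : PDO) : F := fun n => ∑' k : ℕ, a (k : ℤ) n

/-- `P_0(A*)`: the zero-order coefficient (in `Δ*`) of the formal adjoint of `a`,
namely `Σ_{m ≤ 0} (adj a)_m` in the shift basis. -/
noncomputable def P0star (a : PDO) : F := fun n => ∑' k : ℕ, adj a (-(k : ℤ)) n

/-- The residue: the coefficient of `Δ⁻¹`. -/
def res (a : PDO) : F := fun n => a (-1) n

/-- The shift operator `Λ` on functions. -/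
def sh (f : F) : F := fun n => f (n + 1)

/-- The backward shift `Λ⁻¹` on functions. -/
def shInv (f : F) : F := fun n => f (n - 1)

/-- The difference operator `Δ` on functions. -/
def dif (f : F) : F := fun n => f (n + 1) - f n

/-- A genuine formal pseudo-difference operator: finitely many positive-order terms. -/
def BoundedAbove (a : PDO) : Prop := ∃ d : ℤ, ∀ m n : ℤ, d < m → a m n = 0

/-- A local difference operator: a finite sum `Σ_{j=0}^d a_j Δ^j`. -/
def IsLocal (a : PDO) : Prop := ∃ d : ℤ, ∀ m n : ℤ, (m < 0 ∨ d < m) → a m n = 0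

/-- The rank-one operator `φ Δ⁻¹ ψ`. -/
noncomputable def ghost (φ ψ : F) : PDO := pmul (ofFun φ) (pmul pdeltaInv (ofFun ψ))

end DiscreteKP

namespace DiscreteKP

section Aux

open Function

abbrev P1 (k i j : ℤ) : Prop := k < 0 ∧ 0 ≤ k + i + j
abbrev PA (k i j : ℤ) : Prop := k < 0 ∧ 0 ≤ k + i
abbrev PB (k i j : ℤ) : Prop := k + i < 0 ∧ 0 ≤ k + i + j
abbrev P2 (k i j : ℤ) : Prop := k < 0 ∧ 0 ≤ k + j
def x1 (n k i : ℤ) : ℤ := n + k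
def y1 (n k i : ℤ) : ℤ := n + k + i
def x2 (n k i : ℤ) : ℤ := n + k - i
def y2 (n k i : ℤ) : ℤ := n + k

open Classical in
noncomputable def gen (α β : PDO) (P : ℤ → ℤ → ℤ → Prop) (x y : ℤ → ℤ → ℤ) (k i j : ℤ) : ℝ :=
  if P k i j then α i (x k i) * β j (y k i) else 0

variable (α β : PDO) (a b : ℤ) (P : ℤ → ℤ → ℤ → Prop) (x y : ℤ → ℤ → ℤ)

lemma gen_summable_j (hB : ∀ j m : ℤ, (j < 0 ∨ b < j) → β j m = 0) (k i : ℤ) :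
    Summable fun j => gen α β P x y k i j := by
  apply summable_of_ne_finset_zero (s := Finset.Icc 0 b)
  intro j hj
  simp only [Finset.mem_Icc] at hj
  simp only [gen]
  split_ifs
  · rw [hB j _ (by omega), mul_zero]
  · rfl

lemma gen_tsumj_zero_of_i (hA : ∀ i m : ℤ, (i < 0 ∨ a < i) → α i m = 0)
    {i : ℤ} (hi : i < 0 ∨ a < i) (k : ℤ) : (∑' j : ℤ, gen α β P x y k i j) = 0 := by
  have h : ∀ j : ℤ, gen α β P x y k i j = 0 := fun j => by
    simp only [gen]
    split_ifs
    · rw [hA i _ hi, zero_mul]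
    · rfl
  calc (∑' j : ℤ, gen α β P x y k i j) = ∑' _ : ℤ, (0:ℝ) := tsum_congr h
    _ = 0 := tsum_zero

lemma gen_summable_i (hA : ∀ i m : ℤ, (i < 0 ∨ a < i) → α i m = 0) (k : ℤ) :
    Summable fun i => ∑' j : ℤ, gen α β P x y k i j := by
  apply summable_of_ne_finset_zero (s := Finset.Icc 0 a)
  intro i hi
  simp only [Finset.mem_Icc] at hi
  exact gen_tsumj_zero_of_i α β a P x y hA (by omega) k

variable (hA : ∀ i m : ℤ, (i < 0 ∨ a < i) → α i m = 0)
  (hB : ∀ j m : ℤ, (j < 0 ∨ b < j) → β j m = 0)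
  (hP : ∀ k i j : ℤ, P k i j → 0 ≤ i → i ≤ a → 0 ≤ j → j ≤ b → -(a+b) ≤ k ∧ k ≤ -1)

include hA hB hP in
lemma gen_zero_of_k {k : ℤ} (hk : k < -(a+b) ∨ -1 < k) (i j : ℤ) :
    gen α β P x y k i j = 0 := by
  simp only [gen]
  split_ifs with h
  · by_cases hi : 0 ≤ i ∧ i ≤ a
    · by_cases hj : 0 ≤ j ∧ j ≤ b
      · exact absurd (hP k i j h hi.1 hi.2 hj.1 hj.2) (by omega)
      · rw [hB j _ (by omega), mul_zero]
    · rw [hA i _ (by omega), zero_mul]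
  · rfl

include hA hB hP in
lemma gen_tsumj_zero_of_k {k : ℤ} (hk : k < -(a+b) ∨ -1 < k) (i : ℤ) :
    (∑' j : ℤ, gen α β P x y k i j) = 0 := by
  calc (∑' j : ℤ, gen α β P x y k i j) = ∑' _ : ℤ, (0:ℝ) :=
        tsum_congr fun j => gen_zero_of_k α β a b P x y hA hB hP hk i j
    _ = 0 := tsum_zero

include hA hB hP in
lemma gen_tsumij_zero_of_k {k : ℤ} (hk : k < -(a+b) ∨ -1 < k) :
    (∑' i : ℤ, ∑' j : ℤ, gen α β P x y k i j) = 0 := by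
  calc (∑' i : ℤ, ∑' j : ℤ, gen α β P x y k i j) = ∑' _ : ℤ, (0:ℝ) :=
        tsum_congr fun i => gen_tsumj_zero_of_k α β a b P x y hA hB hP hk i
    _ = 0 := tsum_zero

include hA hB hP in
lemma gen_summable_k_of_i (i : ℤ) :
    Summable fun k => ∑' j : ℤ, gen α β P x y k i j := by
  apply summable_of_ne_finset_zero (s := Finset.Icc (-(a+b)) (-1))
  intro k hk
  simp only [Finset.mem_Icc] at hk
  exact gen_tsumj_zero_of_k α β a b P x y hA hB hP (by omega) i

include hA hB hP in
lemma gen_summable_k :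
    Summable fun k => ∑' i : ℤ, ∑' j : ℤ, gen α β P x y k i j := by
  apply summable_of_ne_finset_zero (s := Finset.Icc (-(a+b)) (-1))
  intro k hk
  simp only [Finset.mem_Icc] at hk
  exact gen_tsumij_zero_of_k α β a b P x y hA hB hP (by omega)

include hA hB hP in
lemma gen_summable_unc :
    Summable (Function.uncurry fun i k => ∑' j : ℤ, gen α β P x y k i j) := by
  apply summable_of_ne_finset_zero (s := Finset.Icc 0 a ×ˢ Finset.Icc (-(a+b)) (-1))
  rintro ⟨i, k⟩ hik
  simp only [Finset.mem_product, Finset.mem_Icc] at hik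
  show (∑' j : ℤ, gen α β P x y k i j) = 0
  by_cases hi : i < 0 ∨ a < i
  · exact gen_tsumj_zero_of_i α β a P x y hA hi k
  · exact gen_tsumj_zero_of_k α β a b P x y hA hB hP (by omega) i

end Aux


section Aux2
open Function

variable (α β : PDO) (a b n : ℤ)
variable (hA : ∀ i m : ℤ, (i < 0 ∨ a < i) → α i m = 0)
  (hB : ∀ j m : ℤ, (j < 0 ∨ b < j) → β j m = 0)

include hA hB in
lemma split_pt (k i j : ℤ) :
    gen α β P1 (x1 n) (y1 n) k i j
      = gen α β PA (x1 n) (y1 n) k i j + gen α β PB (x1 n) (y1 n) k i j := by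
  by_cases h1 : α i (x1 n k i) = 0
  · simp [gen, h1]
  by_cases h2 : β j (y1 n k i) = 0
  · simp [gen, h2]
  have hi : 0 ≤ i := by by_contra h; exact h1 (hA i _ (Or.inl (by omega)))
  have hj : 0 ≤ j := by by_contra h; exact h2 (hB j _ (Or.inl (by omega)))
  simp only [gen, P1, PA, PB]
  split_ifs with c1 c2 c3 <;> first | (exfalso; omega) | ring

include hA hB in
lemma key_split (ha0 : 0 ≤ a) (hb0 : 0 ≤ b) :
    (∑' k : ℤ, ∑' i : ℤ, ∑' j : ℤ, gen α β P1 (x1 n) (y1 n) k i j)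
      = (∑' k : ℤ, ∑' i : ℤ, ∑' j : ℤ, gen α β PA (x1 n) (y1 n) k i j)
        + (∑' k : ℤ, ∑' i : ℤ, ∑' j : ℤ, gen α β PB (x1 n) (y1 n) k i j) := by
  have hPA : ∀ k i j : ℤ, PA k i j → 0 ≤ i → i ≤ a → 0 ≤ j → j ≤ b → -(a+b) ≤ k ∧ k ≤ -1 := by
    intro k i j h h1 h2 h3 h4; unfold PA at h; omega
  have hPB : ∀ k i j : ℤ, PB k i j → 0 ≤ i → i ≤ a → 0 ≤ j → j ≤ b → -(a+b) ≤ k ∧ k ≤ -1 := by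
    intro k i j h h1 h2 h3 h4; unfold PB at h; omega
  have step1 : ∀ k i : ℤ,
      (∑' j : ℤ, gen α β P1 (x1 n) (y1 n) k i j)
        = (∑' j : ℤ, gen α β PA (x1 n) (y1 n) k i j)
          + (∑' j : ℤ, gen α β PB (x1 n) (y1 n) k i j) := by
    intro k i
    rw [← Summable.tsum_add (gen_summable_j α β b PA (x1 n) (y1 n) hB k i)
      (gen_summable_j α β b PB (x1 n) (y1 n) hB k i)]
    exact tsum_congr fun j => split_pt α β a b n hA hB k i j
  have step2 : ∀ k : ℤ,
      (∑' i : ℤ, ∑' j : ℤ, gen α β P1 (x1 n) (y1 n) k i j)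
        = (∑' i : ℤ, ∑' j : ℤ, gen α β PA (x1 n) (y1 n) k i j)
          + (∑' i : ℤ, ∑' j : ℤ, gen α β PB (x1 n) (y1 n) k i j) := by
    intro k
    rw [← Summable.tsum_add (gen_summable_i α β a PA (x1 n) (y1 n) hA k)
      (gen_summable_i α β a PB (x1 n) (y1 n) hA k)]
    exact tsum_congr fun i => step1 k i
  rw [← Summable.tsum_add (gen_summable_k α β a b PA (x1 n) (y1 n) hA hB hPA)
    (gen_summable_k α β a b PB (x1 n) (y1 n) hA hB hPB)]
  exact tsum_congr step2

include hA hB in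
lemma key_B (ha0 : 0 ≤ a) (hb0 : 0 ≤ b) :
    (∑' k : ℤ, ∑' i : ℤ, ∑' j : ℤ, gen α β PB (x1 n) (y1 n) k i j)
      = ∑' k : ℤ, ∑' i : ℤ, ∑' j : ℤ, gen α β P2 (x2 n) (y2 n) k i j := by
  have hPB : ∀ k i j : ℤ, PB k i j → 0 ≤ i → i ≤ a → 0 ≤ j → j ≤ b → -(a+b) ≤ k ∧ k ≤ -1 := by
    intro k i j h h1 h2 h3 h4; unfold PB at h; omega
  have hP2 : ∀ k i j : ℤ, P2 k i j → 0 ≤ i → i ≤ a → 0 ≤ j → j ≤ b → -(a+b) ≤ k ∧ k ≤ -1 := by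
    intro k i j h h1 h2 h3 h4; unfold P2 at h; omega
  have mid : ∀ i : ℤ,
      (∑' k : ℤ, ∑' j : ℤ, gen α β PB (x1 n) (y1 n) k i j)
        = ∑' k : ℤ, ∑' j : ℤ, gen α β P2 (x2 n) (y2 n) k i j := by
    intro i
    have hpt : ∀ k j : ℤ, gen α β PB (x1 n) (y1 n) k i j
        = gen α β P2 (x2 n) (y2 n) (k + i) i j := by
      intro k j
      simp only [gen, PB, P2, x1, x2, y1, y2]
      have e1 : n + (k + i) - i = n + k := by ring
      have e2 : n + (k + i) = n + k + i := by ring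
      rw [e1, e2]
    calc (∑' k : ℤ, ∑' j : ℤ, gen α β PB (x1 n) (y1 n) k i j)
        = ∑' k : ℤ, ∑' j : ℤ, gen α β P2 (x2 n) (y2 n) (k + i) i j :=
          tsum_congr fun k => tsum_congr fun j => hpt k j
      _ = ∑' k : ℤ, ∑' j : ℤ, gen α β P2 (x2 n) (y2 n) k i j :=
          (Equiv.addRight i).tsum_eq fun k => ∑' j : ℤ, gen α β P2 (x2 n) (y2 n) k i j
  calc (∑' k : ℤ, ∑' i : ℤ, ∑' j : ℤ, gen α β PB (x1 n) (y1 n) k i j)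
      = ∑' i : ℤ, ∑' k : ℤ, ∑' j : ℤ, gen α β PB (x1 n) (y1 n) k i j :=
        Summable.tsum_comm' (gen_summable_unc α β a b PB (x1 n) (y1 n) hA hB hPB)
          (fun i => gen_summable_k_of_i α β a b PB (x1 n) (y1 n) hA hB hPB i)
          (fun k => gen_summable_i α β a PB (x1 n) (y1 n) hA k)
    _ = ∑' i : ℤ, ∑' k : ℤ, ∑' j : ℤ, gen α β P2 (x2 n) (y2 n) k i j :=
        tsum_congr mid
    _ = ∑' k : ℤ, ∑' i : ℤ, ∑' j : ℤ, gen α β P2 (x2 n) (y2 n) k i j :=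
        (Summable.tsum_comm' (gen_summable_unc α β a b P2 (x2 n) (y2 n) hA hB hP2)
          (fun i => gen_summable_k_of_i α β a b P2 (x2 n) (y2 n) hA hB hP2 i)
          (fun k => gen_summable_i α β a P2 (x2 n) (y2 n) hA k)).symm

end Aux2

section Aux3
open Function

lemma nat_tsum_of (g : ℤ → ℝ) (h0 : ∀ c : ℤ, c < 0 → g c = 0) :
    (∑' t : ℕ, g (t : ℤ)) = ∑' c : ℤ, g c := by
  refine Function.Injective.tsum_eq Nat.cast_injective ?_
  intro c hc
  have hc0 : 0 ≤ c := by
    by_contra h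
    exact hc (h0 c (by omega))
  exact ⟨c.toNat, by omega⟩

variable (α β : PDO) (a b n : ℤ)

lemma lhs_eq :
    res (pmul pdeltaInv (pmul α (pmul β pdeltaInv))) n
      = ∑' k : ℤ, ∑' i : ℤ, ∑' j : ℤ, gen α β P1 (x1 n) (y1 n) k i j := by
  simp only [res, pmul, pdeltaInv]
  refine tsum_congr fun k => ?_
  by_cases hk : k < 0
  · rw [if_pos hk, one_mul]
    refine tsum_congr fun i => ?_
    rw [← tsum_mul_left]
    refine tsum_congr fun j => ?_
    simp only [gen, P1, x1, y1]
    split_ifs <;> first | (exfalso; omega) | ring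
  · rw [if_neg hk, zero_mul]
    symm
    have hz : ∀ i j : ℤ, gen α β P1 (x1 n) (y1 n) k i j = 0 := fun i j => by
      simp only [gen, P1]
      exact if_neg fun h => hk h.1
    calc (∑' i : ℤ, ∑' j : ℤ, gen α β P1 (x1 n) (y1 n) k i j)
        = ∑' _ : ℤ, (0:ℝ) := tsum_congr fun i => by simp only [hz, tsum_zero]
      _ = 0 := tsum_zero

lemma rhs2_eq (hB : ∀ j m : ℤ, (j < 0 ∨ b < j) → β j m = 0) :
    res (pmul pdeltaInv (pmul α (pmul (ofFun (P0 β)) pdeltaInv))) n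
      = ∑' k : ℤ, ∑' i : ℤ, ∑' j : ℤ, gen α β PA (x1 n) (y1 n) k i j := by
  simp only [res, pmul, pdeltaInv, ofFun, P0]
  refine tsum_congr fun k => ?_
  by_cases hk : k < 0
  · rw [if_pos hk, one_mul]
    refine tsum_congr fun i => ?_
    rw [tsum_eq_single 0 (fun j hj => by rw [if_neg hj, zero_mul])]
    rw [if_pos rfl]
    simp only [sub_zero]
    rw [nat_tsum_of (fun c => β c (n + k + i)) (fun c h => hB c _ (Or.inl h))]
    by_cases hc : 0 ≤ k + i
    · rw [if_pos (show -1 - k - i < 0 by omega), mul_one, ← tsum_mul_left]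
      refine tsum_congr fun j => ?_
      simp only [gen, PA, x1, y1]
      rw [if_pos (show k < 0 ∧ 0 ≤ k + i from ⟨hk, hc⟩)]
    · rw [if_neg (show ¬(-1 - k - i < 0) by omega), mul_zero, mul_zero]
      symm
      have hz : ∀ j : ℤ, gen α β PA (x1 n) (y1 n) k i j = 0 := fun j => by
        simp only [gen, PA]
        exact if_neg fun h => hc h.2
      simp only [hz, tsum_zero]
  · rw [if_neg hk, zero_mul]
    symm
    have hz : ∀ i j : ℤ, gen α β PA (x1 n) (y1 n) k i j = 0 := fun i j => by
      simp only [gen, PA]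
      exact if_neg fun h => hk h.1
    calc (∑' i : ℤ, ∑' j : ℤ, gen α β PA (x1 n) (y1 n) k i j)
        = ∑' _ : ℤ, (0:ℝ) := tsum_congr fun i => by simp only [hz, tsum_zero]
      _ = 0 := tsum_zero

lemma rhs1_eq (hA : ∀ i m : ℤ, (i < 0 ∨ a < i) → α i m = 0) :
    res (pmul pdeltaInv (pmul (ofFun (P0star α)) (pmul β pdeltaInv))) n
      = ∑' k : ℤ, ∑' i : ℤ, ∑' j : ℤ, gen α β P2 (x2 n) (y2 n) k i j := by
  simp only [res, pmul, pdeltaInv, ofFun, P0star, adj]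
  refine tsum_congr fun k => ?_
  by_cases hk : k < 0
  · rw [if_pos hk, one_mul]
    rw [tsum_eq_single 0 (fun i hi => by rw [if_neg hi, zero_mul])]
    rw [if_pos rfl]
    simp only [add_zero, sub_zero]
    have e1 : (∑' t : ℕ, α (-(-(t:ℤ))) (n + k + -(t:ℤ))) = ∑' i : ℤ, α i (n + k - i) := by
      rw [← nat_tsum_of (fun c : ℤ => α c (n + k - c)) (fun c h => hA c _ (Or.inl h))]
      refine tsum_congr fun t => ?_
      simp [sub_eq_add_neg]
    rw [e1, ← tsum_mul_right]
    refine tsum_congr fun i => ?_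
    rw [← tsum_mul_left]
    refine tsum_congr fun j => ?_
    simp only [gen, P2, x2, y2]
    split_ifs <;> first | (exfalso; omega) | ring
  · rw [if_neg hk, zero_mul]
    symm
    have hz : ∀ i j : ℤ, gen α β P2 (x2 n) (y2 n) k i j = 0 := fun i j => by
      simp only [gen, P2]
      exact if_neg fun h => hk h.1
    calc (∑' i : ℤ, ∑' j : ℤ, gen α β P2 (x2 n) (y2 n) k i j)
        = ∑' _ : ℤ, (0:ℝ) := tsum_congr fun i => by simp only [hz, tsum_zero]
      _ = 0 := tsum_zero

end Aux3


/-- For local difference operators `α`, `β`: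
`res(Δ⁻¹ α β Δ⁻¹) = res(Δ⁻¹ P_0(α*) β Δ⁻¹) + res(Δ⁻¹ α P_0(β) Δ⁻¹)`. -/
theorem res_deltaInv_local (α β : PDO) (hα : IsLocal α) (hβ : IsLocal β) :
    res (pmul pdeltaInv (pmul α (pmul β pdeltaInv))) =
      res (pmul pdeltaInv (pmul (ofFun (P0star α)) (pmul β pdeltaInv)))
        + res (pmul pdeltaInv (pmul α (pmul (ofFun (P0 β)) pdeltaInv))) := by
  obtain ⟨d1, h1⟩ := hα
  obtain ⟨d2, h2⟩ := hβ
  have hA : ∀ i m : ℤ, (i < 0 ∨ max d1 0 < i) → α i m = 0 := fun i m h => h1 i m (by omega)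
  have hB : ∀ j m : ℤ, (j < 0 ∨ max d2 0 < j) → β j m = 0 := fun j m h => h2 j m (by omega)
  funext n
  rw [Pi.add_apply, lhs_eq α β n,
    rhs1_eq α β (max d1 0) n hA,
    rhs2_eq α β (max d2 0) n hB,
    key_split α β (max d1 0) (max d2 0) n hA hB (le_max_right _ _) (le_max_right _ _),
    key_B α β (max d1 0) (max d2 0) n hA hB (le_max_right _ _) (le_max_right _ _)]
  exact add_comm _ _

end DiscreteKP
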